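/- Let κ_1 ≥ ... ≥ κ_n > 0 with κ_l ≥ δ κ_1 and κ_{l+1} ≤ δ' κ_1, where 1 ≤ l ≤ k−1 and 0 < δ' ≤ δ < 1/2. Then for all p ≠ q with p, q ≤ l: σ_{l-1}(κ|pq) ≤ (C δ'/δ) · σ_{l-1}(κ|p), for a constant C depending only on n and l. -/

import Mathlib

open Finset

/-- The `k`-th elementary symmetric polynomial of `κ : Fin n → ℝ`. -/
noncomputable def esymm (n k : ℕ) (κ : Fin n → ℝ) : ℝ :=
  ∑ s ∈ Finset.univ.powersetCard k, ∏ i ∈ s, κ i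

/-- `σ_k(κ|p)`: elementary symmetric polynomial with the `p`-th entry deleted. -/
noncomputable def esymmDel (n k : ℕ) (κ : Fin n → ℝ) (p : Fin n) : ℝ :=
  ∑ s ∈ (Finset.univ.erase p).powersetCard k, ∏ i ∈ s, κ i

/-- `σ_k(κ|pq)`: elementary symmetric polynomial with the `p`-th and `q`-th entries deleted. -/
noncomputable def esymmDel2 (n k : ℕ) (κ : Fin n → ℝ) (p q : Fin n) : ℝ :=
  ∑ s ∈ ((Finset.univ.erase p).erase q).powersetCard k, ∏ i ∈ s, κ i

lemma le_apply_aux {n m : ℕ} (f : Fin m → Fin n) (hf : StrictMono f) (r : Fin m) :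
    (r : ℕ) ≤ (f r : ℕ) := by
  have hsub : Finset.image f (Finset.Iic r) ⊆ Finset.Iic (f r) := by
    intro x hx
    simp only [Finset.mem_image, Finset.mem_Iic] at hx ⊢
    obtain ⟨i, hi, rfl⟩ := hx
    exact hf.monotone hi
  have := Finset.card_le_card hsub
  rwa [Finset.card_image_of_injective _ hf.injective, Fin.card_Iic, Fin.card_Iic,
    Nat.add_le_add_iff_right] at this

lemma rank_lb1 {n m : ℕ} (f : Fin m → Fin n) (hf : StrictMono f) (p : Fin n)
    (hp : ∀ i, f i ≠ p) (r : Fin m) (hpr : (p : ℕ) ≤ (r : ℕ)) :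
    (r : ℕ) + 1 ≤ (f r : ℕ) := by
  have hle := le_apply_aux f hf r
  have hpf : p ≤ f r := by
    rw [Fin.le_def]; omega
  have hsub : Finset.image f (Finset.Iic r) ⊆ (Finset.Iic (f r)).erase p := by
    intro x hx
    simp only [Finset.mem_image, Finset.mem_Iic, Finset.mem_erase] at hx ⊢
    obtain ⟨i, hi, rfl⟩ := hx
    exact ⟨hp i, hf.monotone hi⟩
  have := Finset.card_le_card hsub
  rw [Finset.card_image_of_injective _ hf.injective, Fin.card_Iic,
    Finset.card_erase_of_mem (Finset.mem_Iic.mpr hpf), Fin.card_Iic] at this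
  omega

/-- The strictly monotone enumeration of `{0,…,l-1} \ {p}`. -/
def gfun (n l : ℕ) (p : Fin n) (hln : l < n) : Fin (l - 1) → Fin n :=
  fun r => ⟨if r.val < p.val then r.val else r.val + 1, by
    have := r.isLt; split <;> omega⟩

lemma gfun_strictMono (n l : ℕ) (p : Fin n) (hln : l < n) :
    StrictMono (gfun n l p hln) := by
  intro a b hab
  rw [Fin.lt_def] at hab ⊢
  simp only [gfun]
  split <;> split <;> omega

lemma gfun_ne (n l : ℕ) (p : Fin n) (hln : l < n) (r : Fin (l - 1)) :
    gfun n l p hln r ≠ p := by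
  simp only [gfun, ne_eq, Fin.ext_iff]
  split <;> omega

lemma gfun_val_le (n l : ℕ) (p : Fin n) (hln : l < n) (hp : p.val < l) (r : Fin (l - 1)) :
    (gfun n l p hln r).val ≤ l - 1 := by
  have := r.isLt
  simp only [gfun]
  split <;> omega

/-- Key term-wise bound. -/
lemma term_bound {n l : ℕ} (hl2 : 2 ≤ l) (hln : l < n)
    (κ : Fin n → ℝ) (hpos : ∀ i, 0 < κ i) (hdec : ∀ i j : Fin n, i ≤ j → κ j ≤ κ i)
    (δ δ' : ℝ) (hδ'pos : 0 < δ') (hδ'δ : δ' ≤ δ)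
    (hκl1 : δ * κ ⟨0, by omega⟩ ≤ κ ⟨l - 1, by omega⟩)
    (hκl : κ ⟨l, hln⟩ ≤ δ' * κ ⟨0, by omega⟩)
    (p q : Fin n) (hpq : p ≠ q) (hp : p.val < l) (hq : q.val < l)
    (s : Finset (Fin n)) (hcard : s.card = l - 1)
    (hsub : s ⊆ (Finset.univ.erase p).erase q) :
    ∏ i ∈ s, κ i ≤ (δ' / δ) * ∏ r : Fin (l - 1), κ (gfun n l p hln r) := by
  have hδpos : (0:ℝ) < δ := lt_of_lt_of_le hδ'pos hδ'δ
  set e := s.orderEmbOfFin hcard with he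
  have hmem : ∀ r, e r ∈ s := fun r => s.orderEmbOfFin_mem hcard r
  have hne_p : ∀ r, e r ≠ p := by
    intro r
    have := hsub (hmem r)
    simp only [Finset.mem_erase] at this
    exact this.2.1
  have hne_q : ∀ r, e r ≠ q := by
    intro r
    have := hsub (hmem r)
    simp only [Finset.mem_erase] at this
    exact this.1
  have hemono : StrictMono e := (s.orderEmbOfFin hcard).strictMono
  -- s as image of e
  have himg : Finset.image e Finset.univ = s := by
    ext x
    simp only [Finset.mem_image, Finset.mem_univ, true_and]
    constructor
    · rintro ⟨r, rfl⟩; exact hmem r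
    · intro hx
      have : x ∈ Set.range e := by rw [s.range_orderEmbOfFin hcard]; exact hx
      obtain ⟨r, hr⟩ := this
      exact ⟨r, hr⟩
  have hprod_s : ∏ i ∈ s, κ i = ∏ r : Fin (l - 1), κ (e r) := by
    rw [← himg, Finset.prod_image (fun a _ b _ hab => hemono.injective hab)]
  -- the top index
  have hl1pos : 0 < l - 1 := by omega
  set top : Fin (l - 1) := ⟨l - 2, by omega⟩ with htopdef
  -- e top ≥ l
  have htop : l ≤ (e top).val := by
    by_contra hlt
    push_neg at hlt
    have hsub2 : s ⊆ ((Finset.Iio (⟨l, hln⟩ : Fin n)).erase p).erase q := by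
      intro x hx
      have hxr : x ∈ Set.range e := by rw [s.range_orderEmbOfFin hcard]; exact hx
      obtain ⟨r, rfl⟩ := hxr
      have hrle : r ≤ top := by
        rw [Fin.le_def]
        have := r.isLt; simp only [htopdef]; omega
      have : (e r).val ≤ (e top).val := hemono.monotone hrle
      have hsx := hsub hx
      simp only [Finset.mem_erase, Finset.mem_Iio] at hsx ⊢
      refine ⟨hsx.1, hsx.2.1, ?_⟩
      rw [Fin.lt_def]
      simp only
      omega
    have hc := Finset.card_le_card hsub2
    have hpmem : p ∈ Finset.Iio (⟨l, hln⟩ : Fin n) := by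
      simp only [Finset.mem_Iio, Fin.lt_def]; exact hp
    have hqmem : q ∈ (Finset.Iio (⟨l, hln⟩ : Fin n)).erase p := by
      simp only [Finset.mem_erase, Finset.mem_Iio, Fin.lt_def]
      exact ⟨fun h => (h ▸ hpq) rfl |>.elim, hq⟩
    rw [hcard, Finset.card_erase_of_mem hqmem, Finset.card_erase_of_mem hpmem,
      Fin.card_Iio] at hc
    simp only [Fin.val_mk] at hc hlt
    omega
  -- factor-wise comparison
  have hfac : ∀ r : Fin (l - 1),
      κ (e r) ≤ (if r = top then δ' / δ else 1) * κ (gfun n l p hln r) := by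
    intro r
    by_cases hr : r = top
    · subst hr
      simp only [if_pos rfl]
      have h1 : κ (e top) ≤ κ ⟨l, hln⟩ := by
        apply hdec
        rw [Fin.le_def]
        exact htop
      have h2 : δ * κ ⟨0, by omega⟩ ≤ κ (gfun n l p hln top) := by
        refine le_trans hκl1 (hdec _ _ ?_)
        rw [Fin.le_def]
        exact gfun_val_le n l p hln hp top
      have h0 : (0:ℝ) < κ ⟨0, by omega⟩ := hpos _
      calc κ (e top) ≤ δ' * κ ⟨0, by omega⟩ := le_trans h1 hκl
        _ = (δ' / δ) * (δ * κ ⟨0, by omega⟩) := by field_simp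
        _ ≤ (δ' / δ) * κ (gfun n l p hln top) := by
            apply mul_le_mul_of_nonneg_left h2 (by positivity)
    · simp only [if_neg hr, one_mul]
      apply hdec
      rw [Fin.le_def]
      simp only [gfun]
      split
      · exact le_apply_aux e hemono r
      · exact rank_lb1 e hemono p hne_p r (by omega)
  calc ∏ i ∈ s, κ i = ∏ r : Fin (l - 1), κ (e r) := hprod_s
    _ ≤ ∏ r : Fin (l - 1), (if r = top then δ' / δ else 1) * κ (gfun n l p hln r) :=
        Finset.prod_le_prod (fun r _ => (hpos _).le) (fun r _ => hfac r)
    _ = (∏ r : Fin (l - 1), (if r = top then δ' / δ else 1)) *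
          ∏ r : Fin (l - 1), κ (gfun n l p hln r) := Finset.prod_mul_distrib
    _ = (δ' / δ) * ∏ r : Fin (l - 1), κ (gfun n l p hln r) := by
        rw [Finset.prod_ite_eq' Finset.univ top (fun _ => δ' / δ)]
        simp

/-- Off-diagonal absorption: σ_{l-1}(κ|pq) ≤ (C δ'/δ) σ_{l-1}(κ|p) for p ≠ q, p,q ≤ l. -/
theorem offdiag_absorb (n l : ℕ) (hl : 1 ≤ l) :
    ∃ C : ℝ, 0 < C ∧ ∀ (k : ℕ) (hlk : l ≤ k - 1) (hkn : k ≤ n),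
      ∀ κ : Fin n → ℝ, (∀ i, 0 < κ i) →
      (∀ i j : Fin n, i ≤ j → κ j ≤ κ i) →
      ∀ δ δ' : ℝ, 0 < δ' → δ' ≤ δ → δ < 1 / 2 →
      δ * κ ⟨0, by omega⟩ ≤ κ ⟨l - 1, by omega⟩ →
      κ ⟨l, by omega⟩ ≤ δ' * κ ⟨0, by omega⟩ →
      ∀ p q : Fin n, p ≠ q → p.val < l → q.val < l →
      esymmDel2 n (l - 1) κ p q ≤ (C * δ' / δ) * esymmDel n (l - 1) κ p := by
  refine ⟨(n.choose (l - 1) : ℝ) + 1, by positivity, ?_⟩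
  intro k hlk hkn κ hpos hdec δ δ' hδ'pos hδ'δ hδhalf hκl1 hκl p q hpq hp hq
  have hln : l < n := by omega
  have hl2 : 2 ≤ l := by
    by_contra h
    push_neg at h
    exact hpq (Fin.ext (by omega))
  have hδpos : (0:ℝ) < δ := lt_of_lt_of_le hδ'pos hδ'δ
  set A := ∏ r : Fin (l - 1), κ (gfun n l p hln r) with hA
  have hApos : 0 < A := Finset.prod_pos (fun r _ => hpos _)
  have hginj : Function.Injective (gfun n l p hln) := (gfun_strictMono n l p hln).injective
  set Sfin := Finset.image (gfun n l p hln) Finset.univ with hS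
  have hScard : Sfin.card = l - 1 := by
    rw [hS, Finset.card_image_of_injective _ hginj, Finset.card_univ, Fintype.card_fin]
  have hSsub : Sfin ⊆ Finset.univ.erase p := by
    intro x hx
    rw [hS, Finset.mem_image] at hx
    obtain ⟨r, _, rfl⟩ := hx
    exact Finset.mem_erase.mpr ⟨gfun_ne n l p hln r, Finset.mem_univ _⟩
  have hSA : ∏ i ∈ Sfin, κ i = A := by
    rw [hS, Finset.prod_image (fun a _ b _ h => hginj h)]
  have hAle : A ≤ esymmDel n (l - 1) κ p := by
    rw [esymmDel, ← hSA]
    exact Finset.single_le_sum (f := fun t => ∏ i ∈ t, κ i)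
      (fun t _ => Finset.prod_nonneg (fun i _ => (hpos i).le))
      (Finset.mem_powersetCard.mpr ⟨hSsub, hScard⟩)
  set P := ((Finset.univ.erase p).erase q).powersetCard (l - 1) with hPdef
  have hterm : ∀ s ∈ P, ∏ i ∈ s, κ i ≤ (δ' / δ) * A := by
    intro s hs
    rw [hPdef, Finset.mem_powersetCard] at hs
    exact term_bound hl2 hln κ hpos hdec δ δ' hδ'pos hδ'δ hκl1 hκl p q hpq hp hq s hs.2 hs.1
  have hcardP : (P.card : ℝ) ≤ (n.choose (l - 1) : ℝ) + 1 := by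
    have h1 : P.card ≤ n.choose (l - 1) := by
      have h2 := Finset.card_le_card
        (Finset.powersetCard_mono (Finset.subset_univ ((Finset.univ.erase p).erase q)) (n := l - 1))
      have h3 : ((Finset.univ : Finset (Fin n)).powersetCard (l - 1)).card = n.choose (l - 1) := by
        rw [Finset.card_powersetCard, Finset.card_univ, Fintype.card_fin]
      exact h3 ▸ h2
    have := Nat.cast_le (α := ℝ) |>.mpr h1
    linarith
  have hsum : esymmDel2 n (l - 1) κ p q ≤ (P.card : ℝ) * ((δ' / δ) * A) := by
    rw [esymmDel2]
    calc ∑ s ∈ P, ∏ i ∈ s, κ i ≤ ∑ _s ∈ P, (δ' / δ) * A := Finset.sum_le_sum hterm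
      _ = (P.card : ℝ) * ((δ' / δ) * A) := by rw [Finset.sum_const, nsmul_eq_mul]
  refine hsum.trans ?_
  have hdpos : (0:ℝ) < δ' / δ := div_pos hδ'pos hδpos
  have hkey : (P.card : ℝ) * ((δ' / δ) * A) ≤ ((n.choose (l - 1) : ℝ) + 1) * ((δ' / δ) * esymmDel n (l - 1) κ p) :=
    mul_le_mul hcardP (mul_le_mul_of_nonneg_left hAle hdpos.le)
      (le_of_lt (mul_pos hdpos hApos)) (by positivity)
  calc (P.card : ℝ) * ((δ' / δ) * A)
      ≤ ((n.choose (l - 1) : ℝ) + 1) * ((δ' / δ) * esymmDel n (l - 1) κ p) := hkey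
    _ = (((n.choose (l - 1) : ℝ) + 1) * δ' / δ) * esymmDel n (l - 1) κ p := by ring
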